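/- Let Θ be a nonnegative random variable such that E[e^{ζΘ}] < ∞ for some ζ > 0. Then for every t with |t| ≤ ζ/2, E[e^{tΘ}] ≤ 1 + E[Θ] t + (1/2) E[Θ⁴]^{1/2} E[e^{ζΘ}]^{1/2} t². -/

import Mathlib

open MeasureTheory ProbabilityTheory Real


lemma exp_taylor_nonneg {x : ℝ} (hx : 0 ≤ x) :
    Real.exp x ≤ 1 + x + x ^ 2 / 2 * Real.exp x := by
  set g : ℝ → ℝ := fun y => 1 + (y + y ^ 2 / 2) * Real.exp y - Real.exp y with hgdef
  have hg' : ∀ y : ℝ, HasDerivAt g ((2 * y + y ^ 2 / 2) * Real.exp y) y := by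
    intro y
    have h1 : HasDerivAt (fun y : ℝ => y + y ^ 2 / 2) (1 + (2:ℕ) * y ^ (2-1) / 2) y :=
      (hasDerivAt_id y).add ((hasDerivAt_pow 2 y).div_const 2)
    have h2 := ((hasDerivAt_const y (1:ℝ)).add (h1.mul (Real.hasDerivAt_exp y))).sub
      (Real.hasDerivAt_exp y)
    refine h2.congr_deriv ?_
    push_cast
    ring
  have hgmono : MonotoneOn g (Set.Ici 0) := by
    apply monotoneOn_of_deriv_nonneg (convex_Ici 0)
      (fun y _ => ((hg' y).continuousAt).continuousWithinAt)
      (fun y _ => ((hg' y).differentiableAt).differentiableWithinAt)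
    intro y hy
    rw [(hg' y).deriv]
    have hy0 : (0:ℝ) < y := by simpa using hy
    positivity
  have hg0 : g 0 = 0 := by simp [hgdef]
  have hgx : 0 ≤ g x := by
    have := hgmono (Set.self_mem_Ici) hx hx
    simpa [hg0] using this
  -- now f
  set f : ℝ → ℝ := fun y => 1 + y + y ^ 2 / 2 * Real.exp y - Real.exp y with hfdef
  have hf' : ∀ y : ℝ, HasDerivAt f (g y) y := by
    intro y
    have h1 : HasDerivAt (fun y : ℝ => y ^ 2 / 2) ((2:ℕ) * y ^ (2-1) / 2) y :=
      (hasDerivAt_pow 2 y).div_const 2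
    have h2 := (((hasDerivAt_const y (1:ℝ)).add (hasDerivAt_id y)).add
      (h1.mul (Real.hasDerivAt_exp y))).sub (Real.hasDerivAt_exp y)
    refine h2.congr_deriv ?_
    simp only [hgdef]
    push_cast
    ring
  have hfmono : MonotoneOn f (Set.Ici 0) := by
    apply monotoneOn_of_deriv_nonneg (convex_Ici 0)
      (fun y _ => ((hf' y).continuousAt).continuousWithinAt)
      (fun y _ => ((hf' y).differentiableAt).differentiableWithinAt)
    intro y hy
    rw [(hf' y).deriv]
    have hy0 : (0:ℝ) < y := by simpa using hy
    have h := hgmono Set.self_mem_Ici (le_of_lt hy0 : y ∈ Set.Ici (0:ℝ)) hy0.le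
    rw [hg0] at h
    exact h
  have hf0 : f 0 = 0 := by simp [hfdef]
  have := hfmono Set.self_mem_Ici hx hx
  rw [hf0] at this
  simp only [hfdef] at this
  linarith

lemma exp_taylor_nonpos {x : ℝ} (hx : x ≤ 0) :
    Real.exp x ≤ 1 + x + x ^ 2 / 2 := by
  set f : ℝ → ℝ := fun y => 1 + y + y ^ 2 / 2 - Real.exp y with hfdef
  have hf' : ∀ y : ℝ, HasDerivAt f (1 + y - Real.exp y) y := by
    intro y
    have h1 : HasDerivAt (fun y : ℝ => y ^ 2 / 2) ((2:ℕ) * y ^ (2-1) / 2) y :=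
      (hasDerivAt_pow 2 y).div_const 2
    have h2 := (((hasDerivAt_const y (1:ℝ)).add (hasDerivAt_id y)).add h1).sub
      (Real.hasDerivAt_exp y)
    refine h2.congr_deriv ?_
    push_cast
    ring
  have hanti : AntitoneOn f (Set.Iic 0) := by
    apply antitoneOn_of_deriv_nonpos (convex_Iic 0)
      (fun y _ => ((hf' y).continuousAt).continuousWithinAt)
      (fun y _ => ((hf' y).differentiableAt).differentiableWithinAt)
    intro y hy
    rw [(hf' y).deriv]
    have := Real.add_one_le_exp y
    linarith
  have := hanti hx Set.self_mem_Iic hx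
  have hf0 : f 0 = 0 := by simp [hfdef]
  rw [hf0] at this
  simp only [hfdef] at this
  linarith

lemma exp_taylor_abs (x : ℝ) :
    Real.exp x ≤ 1 + x + x ^ 2 / 2 * Real.exp |x| := by
  rcases le_or_gt 0 x with h | h
  · rw [abs_of_nonneg h]; exact exp_taylor_nonneg h
  · rw [abs_of_neg h]
    have h1 := exp_taylor_nonpos h.le
    have h2 : (1:ℝ) ≤ Real.exp (-x) := Real.one_le_exp (by linarith)
    nlinarith [sq_nonneg x]

/-- Taylor-type bound on the m.g.f. of a nonnegative random variable. -/
theorem stmt3 {Ω : Type*} [MeasureSpace Ω] [IsProbabilityMeasure (ℙ : Measure Ω)]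
    (Θ : Ω → ℝ) (hmeas : Measurable Θ) (hnn : ∀ ω, 0 ≤ Θ ω)
    (ζ : ℝ) (hζ : 0 < ζ)
    (hint : Integrable (fun ω => Real.exp (ζ * Θ ω))) :
    ∀ t : ℝ, |t| ≤ ζ / 2 →
      (∫ ω, Real.exp (t * Θ ω)) ≤
        1 + (∫ ω, Θ ω) * t
          + (1 / 2) * Real.sqrt (∫ ω, (Θ ω) ^ 4)
              * Real.sqrt (∫ ω, Real.exp (ζ * Θ ω)) * t ^ 2 := by
  intro t ht
  have hta : |t| ≤ ζ / 2 := ht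
  -- integrability facts
  have hexp_nonneg : ∀ ω, (0:ℝ) ≤ Real.exp (ζ * Θ ω) := fun ω => (Real.exp_pos _).le
  have hmeas2 : Measurable fun ω => Real.exp (ζ / 2 * Θ ω) :=
    Real.measurable_exp.comp (hmeas.const_mul _)
  have hI1 : Integrable (fun ω => Real.exp (t * Θ ω)) := by
    refine hint.mono' (Real.measurable_exp.comp (hmeas.const_mul t)).aestronglyMeasurable ?_
    filter_upwards with ω
    rw [Real.norm_eq_abs, abs_of_nonneg (Real.exp_pos _).le, Real.exp_le_exp]
    have : t ≤ ζ := le_trans (le_abs_self t) (hta.trans (by linarith))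
    exact mul_le_mul_of_nonneg_right this (hnn ω)
  have hI2 : Integrable Θ := by
    refine (hint.const_mul (1/ζ)).mono' hmeas.aestronglyMeasurable ?_
    filter_upwards with ω
    rw [Real.norm_eq_abs, abs_of_nonneg (hnn ω)]
    have h1 := Real.add_one_le_exp (ζ * Θ ω)
    rw [div_mul_eq_mul_div, le_div_iff₀ hζ]
    nlinarith [hnn ω]
  have hI3 : Integrable (fun ω => (Θ ω) ^ 4) := by
    refine (hint.const_mul (24 / ζ^4)).mono'
      ((hmeas.pow_const 4).aestronglyMeasurable) ?_
    filter_upwards with ω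
    rw [Real.norm_eq_abs, abs_of_nonneg (by positivity)]
    have h1 : (ζ * Θ ω) ^ 4 / 24 ≤ Real.exp (ζ * Θ ω) := by
      have := Real.pow_div_factorial_le_exp (ζ * Θ ω) (mul_nonneg hζ.le (hnn ω)) 4
      norm_num [Nat.factorial] at this
      linarith
    rw [div_mul_eq_mul_div, le_div_iff₀ (by positivity : (0:ℝ) < ζ^4)]
    nlinarith [pow_nonneg (hnn ω) 4, pow_pos hζ 4]
  have hsq : ∀ ω, Real.exp (ζ / 2 * Θ ω) ^ 2 = Real.exp (ζ * Θ ω) := by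
    intro ω
    rw [← Real.exp_nat_mul]
    congr 1
    push_cast
    ring
  have hI4 : Integrable (fun ω => (Θ ω) ^ 2 * Real.exp (ζ / 2 * Θ ω)) := by
    refine (hint.const_mul (8 / ζ^2)).mono'
      ((hmeas.pow_const 2).mul hmeas2).aestronglyMeasurable ?_
    filter_upwards with ω
    rw [Real.norm_eq_abs, abs_of_nonneg (by positivity)]
    have h1' : (ζ/2 * Θ ω) ^ 2 / 2 ≤ Real.exp (ζ/2 * Θ ω) := by
      have := Real.pow_div_factorial_le_exp (ζ/2 * Θ ω)
        (mul_nonneg (by positivity : (0:ℝ) ≤ ζ/2) (hnn ω)) 2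
      norm_num [Nat.factorial] at this
      linarith
    have h2 : (Θ ω)^2 ≤ 8 / ζ^2 * Real.exp (ζ/2 * Θ ω) := by
      rw [div_mul_eq_mul_div, le_div_iff₀ (by positivity : (0:ℝ) < ζ^2)]
      nlinarith [pow_pos hζ 2]
    calc (Θ ω)^2 * Real.exp (ζ/2 * Θ ω)
        ≤ 8 / ζ^2 * Real.exp (ζ/2 * Θ ω) * Real.exp (ζ/2 * Θ ω) :=
          mul_le_mul_of_nonneg_right h2 (Real.exp_pos _).le
      _ = 8 / ζ^2 * Real.exp (ζ * Θ ω) := by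
          rw [mul_assoc, ← sq, hsq ω]
  -- pointwise bound
  have hpt : ∀ ω, Real.exp (t * Θ ω) ≤
      1 + t * Θ ω + t^2 / 2 * ((Θ ω)^2 * Real.exp (ζ/2 * Θ ω)) := by
    intro ω
    have h1 := exp_taylor_abs (t * Θ ω)
    have h2 : Real.exp |t * Θ ω| ≤ Real.exp (ζ/2 * Θ ω) := by
      rw [Real.exp_le_exp, abs_mul, abs_of_nonneg (hnn ω)]
      exact mul_le_mul_of_nonneg_right hta (hnn ω)
    have h3 : (t * Θ ω)^2 / 2 * Real.exp |t * Θ ω|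
        ≤ t^2 / 2 * ((Θ ω)^2 * Real.exp (ζ/2 * Θ ω)) := by
      have := mul_le_mul_of_nonneg_left h2 (by positivity : (0:ℝ) ≤ (t * Θ ω)^2 / 2)
      calc (t * Θ ω)^2 / 2 * Real.exp |t * Θ ω|
          ≤ (t * Θ ω)^2 / 2 * Real.exp (ζ/2 * Θ ω) := this
        _ = t^2 / 2 * ((Θ ω)^2 * Real.exp (ζ/2 * Θ ω)) := by ring
    linarith
  -- integrate
  have hA : Integrable (fun ω => 1 + t * Θ ω) := (integrable_const 1).add (hI2.const_mul t)
  have hIrhs : Integrable (fun ω => 1 + t * Θ ω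
      + t^2 / 2 * ((Θ ω)^2 * Real.exp (ζ/2 * Θ ω))) :=
    hA.add (hI4.const_mul _)
  have hstep1 : (∫ ω, Real.exp (t * Θ ω)) ≤
      1 + t * (∫ ω, Θ ω) + t^2/2 * (∫ ω, (Θ ω)^2 * Real.exp (ζ/2 * Θ ω)) := by
    calc (∫ ω, Real.exp (t * Θ ω))
        ≤ ∫ ω, (1 + t * Θ ω + t^2/2 * ((Θ ω)^2 * Real.exp (ζ/2 * Θ ω))) :=
          integral_mono hI1 hIrhs hpt
      _ = 1 + t * (∫ ω, Θ ω) + t^2/2 * (∫ ω, (Θ ω)^2 * Real.exp (ζ/2 * Θ ω)) := by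
          rw [integral_add hA (hI4.const_mul _),
            integral_add (integrable_const 1) (hI2.const_mul t),
            integral_const, integral_const_mul, integral_const_mul]
          simp only [probReal_univ, smul_eq_mul, mul_one]
  -- Cauchy-Schwarz
  have hCS : (∫ ω, (Θ ω)^2 * Real.exp (ζ/2 * Θ ω)) ≤
      Real.sqrt (∫ ω, (Θ ω)^4) * Real.sqrt (∫ ω, Real.exp (ζ * Θ ω)) := by
    have hpq : (2:ℝ).HolderConjugate 2 := Real.HolderConjugate.two_two
    have hf : MemLp (fun ω => (Θ ω)^2) (ENNReal.ofReal 2) (ℙ : Measure Ω) := by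
      rw [show ENNReal.ofReal 2 = 2 by norm_num]
      refine (memLp_two_iff_integrable_sq
        (hmeas.pow_const 2).aestronglyMeasurable).2 ?_
      refine hI3.congr ?_
      filter_upwards with ω
      ring
    have hg : MemLp (fun ω => Real.exp (ζ/2 * Θ ω)) (ENNReal.ofReal 2) (ℙ : Measure Ω) := by
      rw [show ENNReal.ofReal 2 = 2 by norm_num]
      refine (memLp_two_iff_integrable_sq hmeas2.aestronglyMeasurable).2 ?_
      refine hint.congr ?_
      filter_upwards with ω
      exact (hsq ω).symm
    have h := integral_mul_le_Lp_mul_Lq_of_nonneg hpq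
      (Filter.Eventually.of_forall fun ω => by positivity)
      (Filter.Eventually.of_forall fun ω => (Real.exp_pos _).le) hf hg
    have rpow2 : ∀ y : ℝ, y ^ (2:ℝ) = y ^ (2:ℕ) := fun y => by
      rw [← Real.rpow_natCast y 2]
      norm_num
    have e1 : (∫ ω, ((Θ ω)^2) ^ (2:ℝ)) = ∫ ω, (Θ ω)^4 := by
      apply integral_congr_ae
      filter_upwards with ω
      rw [rpow2]
      ring
    have e2 : (∫ ω, (Real.exp (ζ/2 * Θ ω)) ^ (2:ℝ)) = ∫ ω, Real.exp (ζ * Θ ω) := by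
      apply integral_congr_ae
      filter_upwards with ω
      rw [rpow2]
      exact hsq ω
    rw [e1, e2, ← Real.sqrt_eq_rpow, ← Real.sqrt_eq_rpow] at h
    exact h
  have hfin : t^2/2 * (∫ ω, (Θ ω)^2 * Real.exp (ζ/2 * Θ ω)) ≤
      1/2 * Real.sqrt (∫ ω, (Θ ω)^4) * Real.sqrt (∫ ω, Real.exp (ζ * Θ ω)) * t^2 := by
    have h := mul_le_mul_of_nonneg_left hCS (by positivity : (0:ℝ) ≤ t^2/2)
    calc t^2/2 * (∫ ω, (Θ ω)^2 * Real.exp (ζ/2 * Θ ω))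
        ≤ t^2/2 * (Real.sqrt (∫ ω, (Θ ω)^4) * Real.sqrt (∫ ω, Real.exp (ζ * Θ ω))) := h
      _ = 1/2 * Real.sqrt (∫ ω, (Θ ω)^4) * Real.sqrt (∫ ω, Real.exp (ζ * Θ ω)) * t^2 := by
          ring
  have hc : t * (∫ ω, Θ ω) = (∫ ω, Θ ω) * t := mul_comm _ _
  calc (∫ ω, Real.exp (t * Θ ω))
      ≤ 1 + t * (∫ ω, Θ ω) + t^2/2 * (∫ ω, (Θ ω)^2 * Real.exp (ζ/2 * Θ ω)) := hstep1
    _ ≤ 1 + t * (∫ ω, Θ ω)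
        + 1/2 * Real.sqrt (∫ ω, (Θ ω)^4) * Real.sqrt (∫ ω, Real.exp (ζ * Θ ω)) * t^2 :=
        add_le_add_right hfin _
    _ = 1 + (∫ ω, Θ ω) * t
        + 1/2 * Real.sqrt (∫ ω, (Θ ω)^4) * Real.sqrt (∫ ω, Real.exp (ζ * Θ ω)) * t^2 := by
        rw [hc]
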